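/- Let n ≥ 1 and let p_1, …, p_n be i.i.d. random variables with common law F supported in [0,1], with moments m_j = ∫ x^j dF(x), and suppose ∑_{j=1}^∞ m_j < ∞. Then E[∑_{k=1}^∞ (1 − ∏_{i=1}^n (1 − p_i^k))] = ∑_{j=1}^∞ (1 − (1 − m_j)^n) = ∑_{k=1}^n binom(n,k) (−1)^{k−1} ζ_F(k), where ζ_F(s) = ∑_{j=1}^∞ m_j^s is the moment zeta function of F. -/

import Mathlib

open MeasureTheory ProbabilityTheory

lemma aux_one_sub_prod_le {ι : Type*} (s : Finset ι) (a : ι → ℝ)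
    (h0 : ∀ i ∈ s, 0 ≤ a i) (h1 : ∀ i ∈ s, a i ≤ 1) :
    1 - ∏ i ∈ s, (1 - a i) ≤ ∑ i ∈ s, a i := by
  classical
  induction s using Finset.induction_on with
  | empty => simp
  | @insert j s' hj ih =>
    rw [Finset.prod_insert hj, Finset.sum_insert hj]
    have h0' : ∀ i ∈ s', 0 ≤ a i := fun i hi => h0 i (Finset.mem_insert_of_mem hi)
    have h1' : ∀ i ∈ s', a i ≤ 1 := fun i hi => h1 i (Finset.mem_insert_of_mem hi)
    have hP0 : 0 ≤ ∏ i ∈ s', (1 - a i) :=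
      Finset.prod_nonneg fun i hi => by linarith [h1' i hi]
    have hP1 : ∏ i ∈ s', (1 - a i) ≤ 1 :=
      Finset.prod_le_one (fun i hi => by linarith [h1' i hi]) (fun i hi => by linarith [h0' i hi])
    have hIH := ih h0' h1'
    have haj0 := h0 j (Finset.mem_insert_self j s')
    nlinarith [hIH, haj0, hP0, hP1]

lemma aux_integrable_prod {Ω : Type*} [MeasureSpace Ω] [IsProbabilityMeasure (ℙ : Measure Ω)]
    {ι : Type*} {g : ι → Ω → ℝ}
    (hindep : iIndepFun g ℙ) (hmeas : ∀ i, Measurable (g i))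
    (hint : ∀ i, Integrable (g i) ℙ) (s : Finset ι) :
    Integrable (∏ i ∈ s, g i) ℙ := by
  classical
  induction s using Finset.induction_on with
  | empty => simp only [Finset.prod_empty]; exact integrable_const (1 : ℝ)
  | @insert j s' hj ih =>
    rw [Finset.prod_insert hj]
    exact ((hindep.indepFun_finsetProd_of_notMem hmeas hj).symm).integrable_mul (hint j) ih

lemma aux_integral_prod {Ω : Type*} [MeasureSpace Ω] [IsProbabilityMeasure (ℙ : Measure Ω)]
    {ι : Type*} {g : ι → Ω → ℝ}
    (hindep : iIndepFun g ℙ) (hmeas : ∀ i, Measurable (g i))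
    (hint : ∀ i, Integrable (g i) ℙ) (s : Finset ι) :
    ∫ ω, ∏ i ∈ s, g i ω = ∏ i ∈ s, ∫ ω, g i ω := by
  classical
  induction s using Finset.induction_on with
  | empty => simp
  | @insert j s' hj ih =>
    have hIndep : IndepFun (g j) (∏ i ∈ s', g i) ℙ :=
      (hindep.indepFun_finsetProd_of_notMem hmeas hj).symm
    have hprodint : Integrable (∏ i ∈ s', g i) ℙ :=
      aux_integrable_prod hindep hmeas hint s'
    have h2 := hIndep.integral_mul_eq_mul_integral (hint j).aestronglyMeasurable hprodint.aestronglyMeasurable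
    have e1 : (g j * ∏ i ∈ s', g i) = fun ω => g j ω * ∏ i ∈ s', g i ω := by
      funext ω; simp [Finset.prod_apply]
    have e2 : integral ℙ (∏ i ∈ s', g i) = ∫ ω, ∏ i ∈ s', g i ω := by
      congr 1; funext ω; simp [Finset.prod_apply]
    rw [e1, e2] at h2
    simp_rw [Finset.prod_insert hj]
    rw [h2, ih]

lemma aux_binom (n : ℕ) (x : ℝ) :
    1 - (1 - x) ^ n = ∑ k ∈ Finset.Icc 1 n, (n.choose k : ℝ) * (-1) ^ (k - 1) * x ^ k := by
  have h : (1 - x : ℝ) ^ n = ∑ k ∈ Finset.range (n+1), (-x)^k * 1^(n-k) * (n.choose k : ℝ) := by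
    rw [← add_pow]; ring_nf
  have hr : Finset.range (n+1) = insert 0 (Finset.Icc 1 n) := by
    ext k; simp [Nat.lt_succ_iff]; omega
  rw [h, hr, Finset.sum_insert (by simp)]
  have hterm : ∀ k ∈ Finset.Icc 1 n,
      ((-x)^k * 1^(n-k) * (n.choose k : ℝ)) = -((n.choose k : ℝ) * (-1) ^ (k - 1) * x ^ k) := by
    intro k hk
    obtain ⟨hk1, _⟩ := Finset.mem_Icc.mp hk
    obtain ⟨l, rfl⟩ : ∃ l, k = l + 1 := ⟨k - 1, by omega⟩
    rw [neg_pow]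
    simp [pow_succ]
    ring
  rw [Finset.sum_congr rfl hterm, Finset.sum_neg_distrib]
  simp

/-- The expectation of the batch-learning convergence time, in terms of moments:
`E[∑_{k≥1} (1 - ∏_i (1 - p_i^k))] = ∑_{j≥1} (1 - (1 - m_j)^n)
  = ∑_{k=1}^n C(n,k) (-1)^{k-1} ζ_F(k)`,
where `ζ_F(s) = ∑_{j≥1} m_j^s` is the moment zeta function of the common law. -/
theorem stmt_16 {Ω : Type*} [MeasureSpace Ω] [IsProbabilityMeasure (ℙ : Measure Ω)]
    (n : ℕ) (hn : 1 ≤ n) (F : Measure ℝ) [IsProbabilityMeasure F]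
    (hsupp : F (Set.Icc (0 : ℝ) 1)ᶜ = 0)
    (p : Fin n → Ω → ℝ) (hmeas : ∀ i, Measurable (p i))
    (hindep : iIndepFun p ℙ)
    (hlaw : ∀ i, Measure.map (p i) ℙ = F)
    (m : ℕ → ℝ) (hm : ∀ j, m j = ∫ x, x ^ j ∂F)
    (hsum : Summable (fun j : ℕ => m (j + 1))) :
    ∫ ω, (∑' k : ℕ, (1 - ∏ i, (1 - p i ω ^ (k + 1))))
        = ∑' j : ℕ, (1 - (1 - m (j + 1)) ^ n) ∧
    ∑' j : ℕ, (1 - (1 - m (j + 1)) ^ n)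
        = ∑ k ∈ Finset.Icc 1 n,
            (n.choose k : ℝ) * (-1) ^ (k - 1) * ∑' j : ℕ, m (j + 1) ^ k := by
  have hFae : ∀ᵐ x ∂F, x ∈ Set.Icc (0:ℝ) 1 := by
    rw [ae_iff]
    exact hsupp
  have hintF : ∀ j : ℕ, Integrable (fun x : ℝ => x ^ j) F := by
    intro j
    refine Integrable.mono' (integrable_const 1)
      ((measurable_id.pow_const j).aestronglyMeasurable) ?_
    filter_upwards [hFae] with x hx
    rw [Real.norm_eq_abs, abs_of_nonneg (pow_nonneg hx.1 j)]
    exact pow_le_one₀ hx.1 hx.2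
  have hm0 : ∀ j, 0 ≤ m j := by
    intro j; rw [hm]
    refine integral_nonneg_of_ae ?_
    filter_upwards [hFae] with x hx using pow_nonneg hx.1 j
  have hm1 : ∀ j, m j ≤ 1 := by
    intro j; rw [hm]
    calc ∫ x, x ^ j ∂F ≤ ∫ _, (1:ℝ) ∂F := by
          refine integral_mono_ae (hintF j) (integrable_const 1) ?_
          filter_upwards [hFae] with x hx using pow_le_one₀ hx.1 hx.2
      _ = 1 := by simp
  have hpae : ∀ i, ∀ᵐ ω ∂(ℙ : Measure Ω), p i ω ∈ Set.Icc (0:ℝ) 1 := by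
    intro i
    have h1 : ∀ᵐ x ∂(Measure.map (p i) ℙ), x ∈ Set.Icc (0:ℝ) 1 := by rw [hlaw i]; exact hFae
    exact (ae_map_iff (hmeas i).aemeasurable measurableSet_Icc).mp h1
  have hallae : ∀ᵐ ω ∂(ℙ : Measure Ω), ∀ i, p i ω ∈ Set.Icc (0:ℝ) 1 := ae_all_iff.mpr hpae
  have hpint : ∀ (i : Fin n) (j : ℕ), ∫ ω, (p i ω) ^ j = m j := by
    intro i j
    rw [hm, ← hlaw i]
    exact (integral_map (μ := ℙ) (φ := p i) (f := fun x : ℝ => x ^ j) (hmeas i).aemeasurable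
      ((measurable_id.pow_const j).aestronglyMeasurable)).symm
  have hpintg : ∀ (i : Fin n) (j : ℕ), Integrable (fun ω => (p i ω) ^ j) ℙ := by
    intro i j
    refine Integrable.mono' (integrable_const 1) (((hmeas i).pow_const j).aestronglyMeasurable) ?_
    filter_upwards [hpae i] with ω hω
    rw [Real.norm_eq_abs, abs_of_nonneg (pow_nonneg hω.1 j)]
    exact pow_le_one₀ hω.1 hω.2
  -- per-k facts
  have hgint : ∀ (k : ℕ) (i : Fin n), Integrable (fun ω => 1 - p i ω ^ (k+1)) ℙ :=
    fun k i => (integrable_const 1).sub (hpintg i (k+1))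
  have hkey : ∀ k : ℕ, ∫ ω, ∏ i, (1 - p i ω ^ (k+1)) = (1 - m (k+1)) ^ n := by
    intro k
    have hindep' : iIndepFun
        (fun i => (fun x : ℝ => 1 - x ^ (k+1)) ∘ p i) ℙ :=
      hindep.comp _ (fun _ => measurable_const.sub (measurable_id.pow_const (k+1)))
    have h := aux_integral_prod hindep'
      (fun i => measurable_const.sub ((hmeas i).pow_const (k+1)))
      (fun i => hgint k i) Finset.univ
    simp only [Function.comp_def] at h
    rw [h]
    have : ∀ i : Fin n, ∫ ω, (1 - p i ω ^ (k+1)) = 1 - m (k+1) := by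
      intro i
      rw [integral_sub (integrable_const 1) (hpintg i (k+1)), hpint i (k+1)]
      simp
    rw [Finset.prod_congr rfl (fun i _ => this i)]
    simp
  have hprodint : ∀ k : ℕ, Integrable (fun ω => ∏ i, (1 - p i ω ^ (k+1))) ℙ := by
    intro k
    refine Integrable.mono' (integrable_const 1) ?_ ?_
    · exact (Finset.measurable_prod Finset.univ
        (fun i _ => measurable_const.sub ((hmeas i).pow_const (k+1)))).aestronglyMeasurable
    · filter_upwards [hallae] with ω hω
      rw [Real.norm_eq_abs, abs_of_nonneg (Finset.prod_nonneg fun i _ => by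
        have := pow_le_one₀ (hω i).1 (hω i).2 (n := k+1); linarith)]
      exact Finset.prod_le_one
        (fun i _ => by have := pow_le_one₀ (hω i).1 (hω i).2 (n := k+1); linarith)
        (fun i _ => by have := pow_nonneg (hω i).1 (k+1); linarith)
  have hfint : ∀ k : ℕ, Integrable (fun ω => 1 - ∏ i, (1 - p i ω ^ (k+1))) ℙ :=
    fun k => (integrable_const 1).sub (hprodint k)
  have hfval : ∀ k : ℕ, ∫ ω, (1 - ∏ i, (1 - p i ω ^ (k+1))) = 1 - (1 - m (k+1)) ^ n := by
    intro k
    rw [integral_sub (integrable_const 1) (hprodint k), hkey k]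
    simp
  have hfnorm : ∀ k : ℕ, ∫ ω, ‖1 - ∏ i, (1 - p i ω ^ (k+1))‖ ≤ n * m (k+1) := by
    intro k
    have hsumint : Integrable (fun ω => ∑ i, p i ω ^ (k+1)) ℙ :=
      integrable_finset_sum _ (fun i _ => hpintg i (k+1))
    have hb : ∀ᵐ ω ∂(ℙ : Measure Ω),
        ‖1 - ∏ i, (1 - p i ω ^ (k+1))‖ ≤ ∑ i, p i ω ^ (k+1) := by
      filter_upwards [hallae] with ω hω
      have h0 : ∀ i ∈ Finset.univ, 0 ≤ p i ω ^ (k+1) := fun i _ => pow_nonneg (hω i).1 _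
      have h1 : ∀ i ∈ Finset.univ, p i ω ^ (k+1) ≤ 1 :=
        fun i _ => pow_le_one₀ (hω i).1 (hω i).2
      have hle := aux_one_sub_prod_le Finset.univ (fun i => p i ω ^ (k+1)) h0 h1
      have hP1 : ∏ i, (1 - p i ω ^ (k+1)) ≤ 1 :=
        Finset.prod_le_one (fun i hi => by have := h1 i hi; linarith)
          (fun i hi => by have := h0 i hi; linarith)
      rw [Real.norm_eq_abs, abs_of_nonneg (by linarith)]
      exact hle
    calc ∫ ω, ‖1 - ∏ i, (1 - p i ω ^ (k+1))‖
        ≤ ∫ ω, ∑ i, p i ω ^ (k+1) := integral_mono_ae (hfint k).norm hsumint hb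
      _ = ∑ i : Fin n, m (k+1) := by
          rw [integral_finset_sum _ (fun i _ => hpintg i (k+1))]
          exact Finset.sum_congr rfl fun i _ => hpint i (k+1)
      _ = n * m (k+1) := by simp [mul_comm]
  have hnorm_summable : Summable (fun k : ℕ => ∫ ω, ‖1 - ∏ i, (1 - p i ω ^ (k+1))‖) :=
    Summable.of_nonneg_of_le (fun k => integral_nonneg fun ω => norm_nonneg _)
      hfnorm (hsum.mul_left (n : ℝ))
  constructor
  · rw [← integral_tsum_of_summable_integral_norm hfint hnorm_summable]
    exact tsum_congr fun k => hfval k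
  · have hmle : ∀ (j k : ℕ), 1 ≤ k → m (j+1) ^ k ≤ m (j+1) := by
      intro j k hk
      calc m (j+1) ^ k ≤ m (j+1) ^ 1 := pow_le_pow_of_le_one (hm0 _) (hm1 _) hk
        _ = m (j+1) := pow_one _
    have hsummk : ∀ k ∈ Finset.Icc 1 n,
        Summable (fun j : ℕ => (n.choose k : ℝ) * (-1) ^ (k-1) * m (j+1) ^ k) := by
      intro k hk
      obtain ⟨hk1, _⟩ := Finset.mem_Icc.mp hk
      exact (Summable.of_nonneg_of_le (fun j => pow_nonneg (hm0 _) _)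
        (fun j => hmle j k hk1) hsum).mul_left _
    calc ∑' j : ℕ, (1 - (1 - m (j+1)) ^ n)
        = ∑' j : ℕ, ∑ k ∈ Finset.Icc 1 n, (n.choose k : ℝ) * (-1) ^ (k-1) * m (j+1) ^ k :=
          tsum_congr fun j => aux_binom n (m (j+1))
      _ = ∑ k ∈ Finset.Icc 1 n, ∑' j : ℕ, (n.choose k : ℝ) * (-1) ^ (k-1) * m (j+1) ^ k :=
          Summable.tsum_finsetSum hsummk
      _ = ∑ k ∈ Finset.Icc 1 n, (n.choose k : ℝ) * (-1) ^ (k-1) * ∑' j : ℕ, m (j+1) ^ k :=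
          Finset.sum_congr rfl fun k _ => tsum_mul_left
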